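/- Let μ ≥ 1 and D ≥ 2 be reals with μ ≤ D, and let t̃ > 0. There exist a natural number N ≤ 100·μ·(1 + ln D) and times s_1,…,s_N ∈ (0, t̃], depending only on t̃, μ and D, such that for every single-machine instance whose durations all lie in [1, D]: ℓ_μ(t̃) ≤ Σ_{k=1}^N ℓ(s_k). -/

import Mathlib

open Finset
open scoped Classical

/-- Load at time `t : ℝ` of a single-machine instance with `n` jobs,
arrival times `a`, durations `d` and weights `w`: job `j` contributes
at times `t` with `a j < t ≤ a j + d j`. -/
noncomputable def singleLoad (n : ℕ) (a d w : Fin n → ℝ) (t : ℝ) : ℝ :=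
  ∑ j ∈ Finset.univ.filter (fun j : Fin n => a j < t ∧ t ≤ a j + d j), w j

lemma exists_pow_between (c : ℝ) (hc : 1 < c) (x : ℝ) (hx : 1 < x) (K : ℕ)
    (hK : x ≤ c ^ K) : ∃ k, k < K ∧ c ^ k < x ∧ x ≤ c ^ (k + 1) := by
  have hex : ∃ m, x ≤ c ^ (m + 1) :=
    ⟨K, hK.trans (pow_le_pow_right₀ (le_of_lt hc) (Nat.le_succ K))⟩
  refine ⟨Nat.find hex, ?_, ?_, Nat.find_spec hex⟩
  · rcases K with _ | m
    · exfalso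
      rw [pow_zero] at hK
      linarith
    · have : Nat.find hex ≤ m := Nat.find_le hK
      omega
  · rcases h : Nat.find hex with _ | m
    · rw [pow_zero]; exact hx
    · have hmin := Nat.find_min hex (show m < Nat.find hex by omega)
      push_neg at hmin
      exact hmin

lemma cover_sum {n N : ℕ} (w : Fin n → ℝ) (hw : ∀ j, 0 ≤ w j)
    (A : Finset (Fin n)) (B : Fin N → Finset (Fin n))
    (hcov : ∀ j ∈ A, ∃ k, j ∈ B k) :
    ∑ j ∈ A, w j ≤ ∑ k, ∑ j ∈ B k, w j := by
  calc ∑ j ∈ A, w j ≤ ∑ j ∈ A, ∑ k : Fin N, (if j ∈ B k then w j else 0) := by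
        apply Finset.sum_le_sum
        intro j hj
        obtain ⟨k₀, hk₀⟩ := hcov j hj
        have h1 : (if j ∈ B k₀ then w j else 0) ≤
            ∑ k : Fin N, (if j ∈ B k then w j else 0) := by
          apply Finset.single_le_sum (f := fun k => if j ∈ B k then w j else 0)
          · intro k _
            split_ifs
            · exact hw j
            · exact le_refl 0
          · exact Finset.mem_univ k₀
        rwa [if_pos hk₀] at h1
    _ = ∑ k : Fin N, ∑ j ∈ A, (if j ∈ B k then w j else 0) := Finset.sum_comm
    _ ≤ ∑ k : Fin N, ∑ j ∈ B k, w j := by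
        apply Finset.sum_le_sum
        intro k _
        calc ∑ j ∈ A, (if j ∈ B k then w j else 0)
            ≤ ∑ j : Fin n, (if j ∈ B k then w j else 0) := by
              apply Finset.sum_le_sum_of_subset_of_nonneg (Finset.subset_univ A)
              intro j _ _
              split_ifs
              · exact hw j
              · exact le_refl 0
          _ = ∑ j ∈ B k, w j := by
              rw [Finset.sum_ite_mem, Finset.univ_inter]

/-- for `μ ≥ 1`, `D ≥ 2` with `μ ≤ D` and `t̃ > 0`, there are
`N ≤ 100·μ·(1 + ln D)` times `s₁,…,s_N ∈ (0, t̃]`, depending only on `t̃, μ, D`,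
such that for every single-machine instance with durations in `[1, D]`,
the load at `t̃` after blowing up all durations by `μ` is at most
`Σ_k ℓ(s_k)`. -/
theorem stmt7 (μ D ttil : ℝ) (hμ : 1 ≤ μ) (hD : 2 ≤ D) (hμD : μ ≤ D)
    (ht : 0 < ttil) :
    ∃ (N : ℕ) (s : Fin N → ℝ),
      (N : ℝ) ≤ 100 * μ * (1 + Real.log D) ∧
      (∀ k, 0 < s k ∧ s k ≤ ttil) ∧
      ∀ (n : ℕ) (a d w : Fin n → ℝ),
        (∀ j, 0 ≤ a j) → (∀ j, 0 ≤ w j) → (∀ j, 1 ≤ d j ∧ d j ≤ D) →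
        singleLoad n a (fun j => μ * d j) w ttil ≤ ∑ k, singleLoad n a d w (s k) := by
  have hμ0 : (0:ℝ) < μ := by linarith
  obtain ⟨c, hc_def⟩ : ∃ c : ℝ, c = 1 + 1 / (2 * μ) := ⟨_, rfl⟩
  have hinv_pos : (0:ℝ) < 1 / (2 * μ) := by positivity
  have hc1 : 1 < c := by rw [hc_def]; linarith
  have hc0 : (0:ℝ) < c := by linarith
  obtain ⟨K, hKdef⟩ : ∃ K : ℕ, K = ⌈Real.log (μ * D) / Real.log c⌉₊ := ⟨_, rfl⟩
  have hlogc_pos : 0 < Real.log c := Real.log_pos hc1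
  have hlogD : 0 < Real.log D := Real.log_pos (by linarith)
  have hlogμ : 0 ≤ Real.log μ := Real.log_nonneg hμ
  have hlogμD : Real.log (μ * D) = Real.log μ + Real.log D :=
    Real.log_mul (by linarith) (by linarith)
  have hlog0 : 0 ≤ Real.log (μ * D) := by rw [hlogμD]; linarith
  have hlogc_lb : 1 / (2 * μ + 1) ≤ Real.log c := by
    have h1 : Real.log (1 / c) ≤ 1 / c - 1 :=
      Real.log_le_sub_one_of_pos (by positivity)
    rw [Real.log_div one_ne_zero (ne_of_gt hc0), Real.log_one] at h1
    have h3 : 1 - 1 / c = 1 / (2 * μ + 1) := by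
      rw [hc_def]; field_simp; ring
    rw [← h3]
    linarith
  -- c ^ K ≥ μ * D
  have hcK : μ * D ≤ c ^ K := by
    have h1 : Real.log (μ * D) / Real.log c ≤ (K : ℝ) := hKdef ▸ Nat.le_ceil _
    have h2 : Real.log (μ * D) ≤ (K : ℝ) * Real.log c := by
      rwa [div_le_iff₀ hlogc_pos] at h1
    have h3 : Real.log (μ * D) ≤ Real.log (c ^ K) := by
      rw [Real.log_pow]; exact h2
    have hμD0 : (0:ℝ) < μ * D := by positivity
    exact (Real.log_le_log_iff hμD0 (pow_pos hc0 K)).mp h3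
  refine ⟨K + 1, fun k => if (k : ℕ) < K ∧ 0 < ttil - c ^ (k : ℕ)
      then ttil - c ^ (k : ℕ) else ttil, ?_, ?_, ?_⟩
  · -- cardinality bound
    have hceil : (K : ℝ) < Real.log (μ * D) / Real.log c + 1 := by
      rw [hKdef]; exact Nat.ceil_lt_add_one (by positivity)
    have h1 : 1 ≤ (2 * μ + 1) * Real.log c := by
      have h2 := mul_le_mul_of_nonneg_left hlogc_lb
        (le_of_lt (by positivity : (0:ℝ) < 2 * μ + 1))
      rw [mul_one_div, div_self (by positivity : (2 * μ + 1) ≠ 0)] at h2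
      exact h2
    have hdiv : Real.log (μ * D) / Real.log c ≤ (2 * μ + 1) * Real.log (μ * D) := by
      rw [div_le_iff₀ hlogc_pos]
      nlinarith [mul_le_mul_of_nonneg_left h1 hlog0]
    have hmono : Real.log μ ≤ Real.log D := Real.log_le_log (by linarith) hμD
    push_cast
    nlinarith [hlogμD]
  · -- times in (0, ttil]
    intro k
    dsimp only
    split_ifs with h
    · exact ⟨h.2, by nlinarith [pow_pos hc0 (k : ℕ)]⟩
    · exact ⟨ht, le_refl ttil⟩
  · -- main inequality
    intro n a d w ha hw hd
    unfold singleLoad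
    apply cover_sum w hw
    intro j hj
    rw [Finset.mem_filter] at hj
    obtain ⟨-, hj1, hj2⟩ := hj
    simp only at hj2
    by_cases hcase : ttil ≤ a j + d j
    · refine ⟨⟨K, Nat.lt_succ_self K⟩, ?_⟩
      rw [Finset.mem_filter]
      refine ⟨Finset.mem_univ _, ?_⟩
      simp only [Fin.val_mk]
      rw [if_neg (fun h => absurd h.1 (lt_irrefl K))]
      exact ⟨hj1, hcase⟩
    · push_neg at hcase
      have hdj1 : 1 ≤ d j := (hd j).1
      have hx1 : 1 < ttil - a j := by linarith
      have hxμ : ttil - a j ≤ μ * d j := by linarith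
      have hxK : ttil - a j ≤ c ^ K := le_trans (by nlinarith [(hd j).2]) hcK
      obtain ⟨k, hkK, hklo, hkhi⟩ := exists_pow_between c hc1 _ hx1 K hxK
      refine ⟨⟨k, by omega⟩, ?_⟩
      have hcond : k < K ∧ 0 < ttil - c ^ k := by
        refine ⟨hkK, ?_⟩
        have := ha j
        linarith
      rw [Finset.mem_filter]
      refine ⟨Finset.mem_univ _, ?_⟩
      simp only [Fin.val_mk]
      rw [if_pos hcond]
      constructor
      · linarith
      · -- ttil - c^k ≤ a j + d j
        have hckpos : (0:ℝ) < c ^ k := pow_pos hc0 k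
        have h1 : ttil - a j ≤ c ^ k * c := by
          rw [← pow_succ]; exact hkhi
        have hsplit : c ^ k * c = c ^ k + c ^ k * (1 / (2 * μ)) := by
          rw [hc_def]; ring
        have h2 : ttil - a j - c ^ k ≤ c ^ k * (1 / (2 * μ)) := by
          rw [hsplit] at h1; linarith
        have h3 : c ^ k * (1 / (2 * μ)) < (ttil - a j) * (1 / (2 * μ)) :=
          mul_lt_mul_of_pos_right hklo (by positivity)
        have h4 : (ttil - a j) * (1 / (2 * μ)) ≤ d j := by
          rw [mul_one_div, div_le_iff₀ (by positivity : (0:ℝ) < 2 * μ)]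
          nlinarith
        linarith
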